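/- A separable bipartite density matrix has positive semidefinite partial transpose: if ρ = Σ_k p_k σ_k ⊗ τ_k with p_k ≥ 0, Σ p_k = 1, and σ_k, τ_k density matrices, then ρ^{Γ_B} = Σ_k p_k σ_k ⊗ τ_k^T is positive semidefinite. -/

import Mathlib

open Matrix Kronecker
open scoped BigOperators Classical ComplexOrder

noncomputable section

def grho {V : Type*} [Fintype V] [DecidableEq V] (G : SimpleGraph V) : Matrix V V ℂ :=
  ((2 * G.edgeFinset.card : ℂ))⁻¹ • G.lapMatrix ℂ

def degM {V : Type*} [Fintype V] [DecidableEq V] (G : SimpleGraph V) : Matrix V V ℂ :=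
  Matrix.diagonal fun v => (G.degree v : ℂ)

def ptB {p q : ℕ} {α : Type*} (A : Matrix (Fin p × Fin q) (Fin p × Fin q) α) :
    Matrix (Fin p × Fin q) (Fin p × Fin q) α :=
  fun x y => A (x.1, y.2) (y.1, x.2)

def gptB {p q : ℕ} (G : SimpleGraph (Fin p × Fin q)) : SimpleGraph (Fin p × Fin q) where
  Adj x y := G.Adj (x.1, y.2) (y.1, x.2)
  symm := ⟨fun x y h => G.symm.symm _ _ h⟩
  loopless := ⟨fun x h => G.loopless.irrefl x h⟩

def IsDensityMatrix {n : Type*} [Fintype n] [DecidableEq n] (A : Matrix n n ℂ) : Prop :=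
  A.PosSemidef ∧ A.trace = 1

def Separable {p q : ℕ} (ρ : Matrix (Fin p × Fin q) (Fin p × Fin q) ℂ) : Prop :=
  ∃ (m : ℕ) (w : Fin m → ℝ) (σ : Fin m → Matrix (Fin p) (Fin p) ℂ)
    (τ : Fin m → Matrix (Fin q) (Fin q) ℂ),
    (∀ k, 0 ≤ w k) ∧ (∑ k, w k = 1) ∧
    (∀ k, IsDensityMatrix (σ k)) ∧ (∀ k, IsDensityMatrix (τ k)) ∧
    ρ = ∑ k, (w k : ℂ) • (σ k ⊗ₖ τ k)

def proj {n : Type*} (ψ : n → ℂ) : Matrix n n ℂ := vecMulVec ψ (star ψ)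

lemma kron_conjTranspose {n m : Type*} (A : Matrix n n ℂ) (B : Matrix m m ℂ) :
    (A ⊗ₖ B)ᴴ = Aᴴ ⊗ₖ Bᴴ := by
  ext ⟨i,j⟩ ⟨k,l⟩
  simp [conjTranspose_apply, kroneckerMap_apply, mul_comm]

lemma psd_kron {n m : Type*} [Fintype n] [DecidableEq n] [Fintype m] [DecidableEq m]
    {A : Matrix n n ℂ} {B : Matrix m m ℂ} (hA : A.PosSemidef) (hB : B.PosSemidef) :
    (A ⊗ₖ B).PosSemidef := by
  exact hA.kronecker hB

lemma psd_smul {n : Type*} [Fintype n] {A : Matrix n n ℂ} (hA : A.PosSemidef)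
    {c : ℝ} (hc : 0 ≤ c) : ((c : ℂ) • A).PosSemidef := by
  rw [Matrix.posSemidef_iff_dotProduct_mulVec]
  constructor
  · unfold Matrix.IsHermitian
    rw [conjTranspose_smul, hA.1.eq]
    congr 1
    simp
  · intro x
    have := hA.dotProduct_mulVec_nonneg x
    rw [Matrix.smul_mulVec, dotProduct_smul, smul_eq_mul]
    exact mul_nonneg (by exact_mod_cast hc) this

theorem stmt9 (p q m : ℕ) (ρ : Matrix (Fin p × Fin q) (Fin p × Fin q) ℂ)
    (w : Fin m → ℝ) (σ : Fin m → Matrix (Fin p) (Fin p) ℂ)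
    (τ : Fin m → Matrix (Fin q) (Fin q) ℂ)
    (hw : ∀ k, 0 ≤ w k) (hw1 : ∑ k, w k = 1)
    (hσ : ∀ k, IsDensityMatrix (σ k)) (hτ : ∀ k, IsDensityMatrix (τ k))
    (hρ : ρ = ∑ k, (w k : ℂ) • (σ k ⊗ₖ τ k)) :
    ptB ρ = (∑ k, (w k : ℂ) • (σ k ⊗ₖ (τ k)ᵀ)) ∧ (ptB ρ).PosSemidef := by
  have heq : ptB ρ = ∑ k, (w k : ℂ) • (σ k ⊗ₖ (τ k)ᵀ) := by
    subst hρ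
    ext ⟨i,j⟩ ⟨k,l⟩
    simp [ptB, Matrix.sum_apply, Matrix.smul_apply, kroneckerMap_apply, transpose_apply]
  refine ⟨heq, heq ▸ ?_⟩
  exact Finset.sum_induction _ Matrix.PosSemidef (fun a b ha hb => ha.add hb)
    Matrix.PosSemidef.zero
    (fun k _ => psd_smul (psd_kron (hσ k).1 (hτ k).1.transpose) (hw k))
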